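/- Let ψ_k be the triangular density of the difference of two independent Uniform[−1/k,1/k] variables (supported in [−2/k,2/k], ∫ψ_k = 1, symmetric). For any integer m ≥ 1, R > 2 m and k ≥ 3, | ∫ ψ_k(t) log|m + t| (1 − |m + t|/R) dt − log(m)(1 − m/R) | ≤ C k^{−2} ( m^{−2} + (m R)^{−1} ) for a universal constant C. -/

import Mathlib

open MeasureTheory

/-- The triangular "hat" density of the difference of two independent
`Uniform[-1/k, 1/k]` random variables. -/
noncomputable def hatDensity (k : ℕ) (t : ℝ) : ℝ :=
  max ((k : ℝ) / 2 * (1 - (k : ℝ) * |t| / 2)) 0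

lemma hat_nonneg (k : ℕ) (t : ℝ) : 0 ≤ hatDensity k t := le_max_right _ _

lemma hat_continuous (k : ℕ) : Continuous (hatDensity k) := by
  unfold hatDensity; fun_prop

lemma hat_even (k : ℕ) (t : ℝ) : hatDensity k (-t) = hatDensity k t := by
  simp [hatDensity, abs_neg]

lemma hat_eq_zero {k : ℕ} {t : ℝ} (hk : 1 ≤ k) (ht : 2 / (k:ℝ) ≤ |t|) :
    hatDensity k t = 0 := by
  have hk0 : (0:ℝ) < k := by exact_mod_cast hk
  have h2 : (2:ℝ) ≤ (k:ℝ) * |t| := by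
    have := mul_le_mul_of_nonneg_left ht hk0.le
    rwa [mul_div_cancel₀ _ hk0.ne'] at this
  have : (k:ℝ)/2 * (1 - (k:ℝ) * |t| / 2) ≤ 0 := by nlinarith
  simp [hatDensity, max_eq_right this]

lemma hat_lt {k : ℕ} {t : ℝ} (hk : 1 ≤ k) (h : hatDensity k t ≠ 0) : |t| < 2 / (k:ℝ) := by
  by_contra hc
  exact h (hat_eq_zero hk (not_lt.mp hc))

lemma hat_hcs (k : ℕ) (hk : 1 ≤ k) : HasCompactSupport (hatDensity k) := by
  apply HasCompactSupport.intro (isCompact_Icc (a := -(2/(k:ℝ))) (b := 2/(k:ℝ)))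
  intro x hx
  apply hat_eq_zero hk
  by_contra hc
  exact hx (by constructor <;> [linarith [neg_abs_le x, not_le.mp hc]; linarith [le_abs_self x, not_le.mp hc]])

lemma hat_integrable (k : ℕ) (hk : 1 ≤ k) : Integrable (hatDensity k) :=
  (hat_continuous k).integrable_of_hasCompactSupport (hat_hcs k hk)

lemma hat_mul_id (k : ℕ) : ∫ t, hatDensity k t * t = 0 := by
  have h := integral_neg_eq_self (fun t => hatDensity k t * t) (volume : Measure ℝ)
  simp only [hat_even] at h
  have h2 : (fun t => hatDensity k t * (-t)) = fun t => -(hatDensity k t * t) := by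
    funext t; ring
  rw [h2, integral_neg] at h
  linarith

lemma hat_integral (k : ℕ) (hk : 1 ≤ k) : ∫ t, hatDensity k t = 1 := by
  have hk0 : (0:ℝ) < k := by exact_mod_cast hk
  set c : ℝ := 2 / (k:ℝ) with hc
  have hc0 : 0 < c := by positivity
  have hind : (fun t => hatDensity k t)
      = Set.indicator (Set.Icc (-c) c) (fun t => (k:ℝ)/2 * (1 - (k:ℝ) * |t| / 2)) := by
    funext t
    by_cases ht : t ∈ Set.Icc (-c) c
    · rw [Set.indicator_of_mem ht]
      have habs : |t| ≤ c := abs_le.mpr ⟨ht.1, ht.2⟩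
      have h1 : (k:ℝ) * |t| ≤ 2 := by
        have := mul_le_mul_of_nonneg_left habs hk0.le
        rwa [hc, mul_div_cancel₀ _ hk0.ne'] at this
      exact max_eq_left (by nlinarith [abs_nonneg t])
    · rw [Set.indicator_of_notMem ht]
      apply hat_eq_zero hk
      rw [Set.mem_Icc] at ht
      push_neg at ht
      rcases le_or_gt (-c) t with h | h
      · have := ht h
        calc 2 / (k:ℝ) = c := rfl
        _ ≤ t := this.le
        _ ≤ |t| := le_abs_self t
      · calc 2 / (k:ℝ) = c := rfl
        _ ≤ -t := by linarith
        _ ≤ |t| := neg_le_abs t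
  rw [hind, integral_indicator measurableSet_Icc, integral_Icc_eq_integral_Ioc,
    ← intervalIntegral.integral_of_le (by linarith : -c ≤ c)]
  have hcont : Continuous (fun t : ℝ => (k:ℝ)/2 * (1 - (k:ℝ) * |t| / 2)) := by fun_prop
  rw [← intervalIntegral.integral_add_adjacent_intervals (b := 0)
    (hcont.intervalIntegrable _ _) (hcont.intervalIntegrable _ _)]
  have hneg : (∫ t in (-c)..(0:ℝ), (k:ℝ)/2 * (1 - (k:ℝ) * |t| / 2))
      = ∫ t in (0:ℝ)..c, (k:ℝ)/2 * (1 - (k:ℝ) * |t| / 2) := by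
    have h := intervalIntegral.integral_comp_neg (a := (0:ℝ)) (b := c)
      (fun t => (k:ℝ)/2 * (1 - (k:ℝ) * |t| / 2))
    simp only [abs_neg, neg_zero] at h
    exact h.symm
  rw [hneg]
  have hpos : (∫ t in (0:ℝ)..c, (k:ℝ)/2 * (1 - (k:ℝ) * |t| / 2))
      = ∫ t in (0:ℝ)..c, ((k:ℝ)/2 - (k:ℝ)^2/4 * t) := by
    apply intervalIntegral.integral_congr
    intro t ht
    rw [Set.uIcc_of_le hc0.le, Set.mem_Icc] at ht
    dsimp only
    rw [abs_of_nonneg ht.1]; ring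
  rw [hpos]
  rw [intervalIntegral.integral_sub
    (Continuous.intervalIntegrable (by fun_prop) _ _)
    (Continuous.intervalIntegrable (by fun_prop) _ _)]
  rw [intervalIntegral.integral_const, intervalIntegral.integral_const_mul, integral_id]
  have : c = 2 / (k:ℝ) := rfl
  rw [this]
  field_simp
  ring_nf
  rw [mul_inv_cancel₀ hk0.ne']
  ring

set_option maxHeartbeats 2000000 in
/-- for the hat density `ψ_k`, any integer `m ≥ 1`, `R > 2m` and
`k ≥ 3`,
`|∫ ψ_k(t) log|m+t| (1 - |m+t|/R) dt - log(m)(1 - m/R)| ≤ C k⁻²(m⁻² + (mR)⁻¹)`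
for a universal constant `C`. -/
theorem hat_density_log_estimate :
    ∃ C : ℝ, 0 < C ∧ ∀ (k m : ℕ) (R : ℝ), 3 ≤ k → 1 ≤ m → 2 * (m : ℝ) < R →
      |(∫ t, hatDensity k t * (Real.log |(m : ℝ) + t| * (1 - |(m : ℝ) + t| / R)))
          - Real.log m * (1 - (m : ℝ) / R)|
        ≤ C * ((k : ℝ) ^ 2)⁻¹ * (((m : ℝ) ^ 2)⁻¹ + ((m : ℝ) * R)⁻¹) := by
  refine ⟨36, by norm_num, ?_⟩
  intro k m R hk hm hR
  have hk1 : 1 ≤ k := le_trans (by norm_num) hk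
  have hk3 : (3:ℝ) ≤ (k:ℝ) := by exact_mod_cast hk
  have hk0 : (0:ℝ) < k := by linarith
  have hm1 : (1:ℝ) ≤ (m:ℝ) := by exact_mod_cast hm
  have hm0 : (0:ℝ) < m := by linarith
  have hR0 : (0:ℝ) < R := by linarith
  set c : ℝ := 2 / (k:ℝ) with hcdef
  have hc0 : 0 < c := by positivity
  have hc23 : c ≤ 2/3 := by
    rw [hcdef, div_le_div_iff₀ hk0 (by norm_num)]; linarith
  set S : Set ℝ := Set.Icc (-c) c with hSdef
  have h0S : (0:ℝ) ∈ S := ⟨by linarith, by linarith⟩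
  have hlb : ∀ x ∈ S, (1:ℝ)/3 ≤ (m:ℝ) + x := by
    intro x hx; have := hx.1; linarith
  have hpos : ∀ x ∈ S, (0:ℝ) < (m:ℝ) + x := by
    intro x hx; linarith [hlb x hx]
  have hlbm : ∀ x ∈ S, (m:ℝ)/3 ≤ (m:ℝ) + x := by
    intro x hx; have := hx.1; linarith
  have hub : ∀ x ∈ S, (m:ℝ) + x ≤ R := by
    intro x hx; have := hx.2; linarith
  set h : ℝ → ℝ := fun x => Real.log ((m:ℝ)+x) * (1 - ((m:ℝ)+x)/R) with hh
  set h1 : ℝ → ℝ := fun x => ((m:ℝ)+x)⁻¹ * (1 - ((m:ℝ)+x)/R) - Real.log ((m:ℝ)+x) / R with hh1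
  set h2 : ℝ → ℝ := fun x => -(((m:ℝ)+x)⁻¹)^2 * (1 - ((m:ℝ)+x)/R) - 2 * ((m:ℝ)+x)⁻¹ / R with hh2
  set M : ℝ := 9 * ((((m:ℝ))^2)⁻¹ + ((m:ℝ)*R)⁻¹) with hM
  have hM0 : 0 ≤ M := by positivity
  -- derivatives
  have hu : ∀ x : ℝ, HasDerivAt (fun y : ℝ => (m:ℝ) + y) 1 x := by
    intro x
    simpa using (hasDerivAt_id x).const_add (m:ℝ)
  have hd1 : ∀ x ∈ S, HasDerivAt h (h1 x) x := by
    intro x hx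
    have hux := (hpos x hx).ne'
    have hlog : HasDerivAt (fun y => Real.log ((m:ℝ)+y)) (((m:ℝ)+x)⁻¹) x := by
      have := (Real.hasDerivAt_log hux).comp x (hu x)
      rwa [mul_one] at this
    have hlin : HasDerivAt (fun y => 1 - ((m:ℝ)+y)/R) (-(1/R)) x := by
      simpa using ((hu x).div_const R).const_sub 1
    have hmul := hlog.mul hlin
    rw [hh, hh1]
    refine hmul.congr_deriv ?_
    ring
  have hd2 : ∀ x ∈ S, HasDerivAt h1 (h2 x) x := by
    intro x hx
    have hux := (hpos x hx).ne'
    have hinv : HasDerivAt (fun y => ((m:ℝ)+y)⁻¹) (-1/((m:ℝ)+x)^2) x := by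
      exact (hu x).inv hux
    have hlog : HasDerivAt (fun y => Real.log ((m:ℝ)+y)) (((m:ℝ)+x)⁻¹) x := by
      have := (Real.hasDerivAt_log hux).comp x (hu x)
      rwa [mul_one] at this
    have hlin : HasDerivAt (fun y => 1 - ((m:ℝ)+y)/R) (-(1/R)) x := by
      simpa using ((hu x).div_const R).const_sub 1
    have hmul := (hinv.mul hlin).sub (hlog.div_const R)
    rw [hh1, hh2]
    refine hmul.congr_deriv ?_
    have hx0 : ((m:ℝ)+x) ≠ 0 := hux
    field_simp
    ring
  -- second derivative bound
  have hMbound : ∀ x ∈ S, |h2 x| ≤ M := by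
    intro x hx
    have hv0 : 0 < (m:ℝ) + x := hpos x hx
    have hvm : (m:ℝ)/3 ≤ (m:ℝ) + x := hlbm x hx
    have hvR : (m:ℝ) + x ≤ R := hub x hx
    set v : ℝ := (m:ℝ) + x
    set a : ℝ := v⁻¹ with ha
    have ha0 : 0 ≤ a := by positivity
    have hainv : a ≤ 3/(m:ℝ) := by
      rw [ha]
      calc v⁻¹ ≤ ((m:ℝ)/3)⁻¹ := inv_anti₀ (by positivity) hvm
      _ = 3/(m:ℝ) := by rw [inv_div]
    have hA0 : 0 ≤ 1 - v/R := by
      rw [sub_nonneg]; exact (div_le_one hR0).mpr hvR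
    have hA1 : 1 - v/R ≤ 1 := by
      have : 0 ≤ v/R := by positivity
      linarith
    have h2x : h2 x = -(a^2 * (1 - v/R)) - 2*a/R := by rw [hh2]; ring
    have hnp : h2 x ≤ 0 := by
      rw [h2x]
      have := mul_nonneg (mul_nonneg ha0 ha0) hA0
      have : 0 ≤ 2*a/R := by positivity
      nlinarith [mul_nonneg (sq_nonneg a) hA0]
    rw [abs_of_nonpos hnp, h2x]
    have e1 : a^2 * (1 - v/R) ≤ 9 * (((m:ℝ))^2)⁻¹ := by
      have hsq : a^2 ≤ (3/(m:ℝ))^2 := pow_le_pow_left₀ ha0 hainv 2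
      have h9 : (3/(m:ℝ))^2 = 9 * (((m:ℝ))^2)⁻¹ := by
        rw [div_pow, div_eq_mul_inv]; norm_num
      calc a^2 * (1 - v/R) ≤ a^2 * 1 := mul_le_mul_of_nonneg_left hA1 (sq_nonneg a)
      _ = a^2 := mul_one _
      _ ≤ (3/(m:ℝ))^2 := hsq
      _ = 9 * (((m:ℝ))^2)⁻¹ := h9
    have e2 : 2*a/R ≤ 6 * ((m:ℝ)*R)⁻¹ := by
      have h6 : 2*a ≤ 6/(m:ℝ) := by
        have := hainv
        rw [div_eq_mul_inv] at this ⊢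
        nlinarith
      calc 2*a/R ≤ (6/(m:ℝ))/R := by gcongr
      _ = 6 * ((m:ℝ)*R)⁻¹ := by rw [div_div, div_eq_mul_inv]
    have hmr : 0 ≤ ((m:ℝ)*R)⁻¹ := by positivity
    rw [hM]
    linarith
  -- Taylor step 1
  have step1 : ∀ s ∈ S, |h1 s - h1 0| ≤ M * c := by
    intro s hs
    have key := Convex.norm_image_sub_le_of_norm_hasDerivWithin_le
      (f := h1) (f' := h2) (s := S)
      (fun x hx => (hd2 x hx).hasDerivWithinAt)
      (fun x hx => by rw [Real.norm_eq_abs]; exact hMbound x hx)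
      (convex_Icc _ _) h0S hs
    rw [Real.norm_eq_abs, Real.norm_eq_abs, sub_zero] at key
    have habs : |s| ≤ c := abs_le.mpr ⟨hs.1, hs.2⟩
    calc |h1 s - h1 0| ≤ M * |s| := key
    _ ≤ M * c := mul_le_mul_of_nonneg_left habs hM0
  -- Taylor step 2
  have step2 : ∀ t ∈ S, |h t - h 0 - h1 0 * t| ≤ M * c * c := by
    intro t ht
    have hder : ∀ x ∈ S, HasDerivWithinAt (fun s => h s - h1 0 * s) (h1 x - h1 0) S x := by
      intro x hx
      exact ((hd1 x hx).sub (by simpa using (hasDerivAt_id x).const_mul (h1 0))).hasDerivWithinAt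
    have key := Convex.norm_image_sub_le_of_norm_hasDerivWithin_le hder
      (fun x hx => by rw [Real.norm_eq_abs]; exact step1 x hx) (convex_Icc _ _) h0S ht
    rw [Real.norm_eq_abs, Real.norm_eq_abs, sub_zero] at key
    have habs : |t| ≤ c := abs_le.mpr ⟨ht.1, ht.2⟩
    have he : (h t - h1 0 * t) - (h 0 - h1 0 * 0) = h t - h 0 - h1 0 * t := by ring
    calc |h t - h 0 - h1 0 * t| = |(h t - h1 0 * t) - (h 0 - h1 0 * 0)| := by rw [he]
    _ ≤ M * c * |t| := key
    _ ≤ M * c * c := mul_le_mul_of_nonneg_left habs (by positivity)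
  -- continuous extension
  set g : ℝ → ℝ := fun t => Real.log (max ((m:ℝ)+t) 3⁻¹) * (1 - max ((m:ℝ)+t) 3⁻¹ / R) with hg
  have hmaxc : Continuous (fun t : ℝ => max ((m:ℝ)+t) 3⁻¹) := by fun_prop
  have hgcont : Continuous g := by
    rw [hg]
    exact (hmaxc.log (fun t => ne_of_gt (lt_of_lt_of_le (by norm_num) (le_max_right _ _)))).mul
      (continuous_const.sub (hmaxc.div_const R))
  have hge : ∀ t ∈ S, g t = h t := by
    intro t htS
    have h13 := hlb t htS
    have hmax : max ((m:ℝ)+t) 3⁻¹ = (m:ℝ)+t := max_eq_left (by rw [show ((3:ℝ))⁻¹ = 1/3 by norm_num]; linarith)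
    rw [hg, hh]
    dsimp only
    rw [hmax]
  have horig : ∀ t, |t| < c → Real.log |(m:ℝ)+t| * (1 - |(m:ℝ)+t|/R) = h t := by
    intro t ht
    have htS : t ∈ S := ⟨(abs_lt.mp ht).1.le, (abs_lt.mp ht).2.le⟩
    have hp := hpos t htS
    rw [hh]
    dsimp only
    rw [abs_of_pos hp]
  have e1 : (fun t => hatDensity k t * (Real.log |(m:ℝ)+t| * (1 - |(m:ℝ)+t|/R)))
      = fun t => hatDensity k t * g t := by
    funext t
    by_cases hψ : hatDensity k t = 0
    · rw [hψ]; ring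
    · have ht := hat_lt hk1 hψ
      have htS : t ∈ S := ⟨(abs_lt.mp ht).1.le, (abs_lt.mp ht).2.le⟩
      rw [horig t ht, hge t htS]
  -- integrability
  have hhcs := hat_hcs k hk1
  have hint_ψ := hat_integrable k hk1
  have hint_g : Integrable (fun t => hatDensity k t * g t) :=
    ((hat_continuous k).mul hgcont).integrable_of_hasCompactSupport hhcs.mul_right
  have hint_ψt : Integrable (fun t => hatDensity k t * t) :=
    ((hat_continuous k).mul continuous_id).integrable_of_hasCompactSupport hhcs.mul_right
  have hFcont : Continuous (fun t => g t - h 0 - h1 0 * t) :=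
    (hgcont.sub continuous_const).sub (continuous_const.mul continuous_id)
  have hint_F : Integrable (fun t => hatDensity k t * (g t - h 0 - h1 0 * t)) :=
    ((hat_continuous k).mul hFcont).integrable_of_hasCompactSupport hhcs.mul_right
  -- key identity
  have h00 : Real.log m * (1 - (m:ℝ)/R) = h 0 := by
    rw [hh]; dsimp only; rw [add_zero]
  have key : (∫ t, hatDensity k t * (Real.log |(m:ℝ)+t| * (1 - |(m:ℝ)+t|/R)))
      - Real.log m * (1 - (m:ℝ)/R)
      = ∫ t, hatDensity k t * (g t - h 0 - h1 0 * t) := by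
    rw [e1, h00]
    have hsplit : (fun t => hatDensity k t * (g t - h 0 - h1 0 * t))
        = fun t => hatDensity k t * g t - h 0 * hatDensity k t - h1 0 * (hatDensity k t * t) := by
      funext t; ring
    have hintA : Integrable (fun t => hatDensity k t * g t - h 0 * hatDensity k t) volume :=
      hint_g.sub (hint_ψ.const_mul _)
    have hintB : Integrable (fun t => h1 0 * (hatDensity k t * t)) volume :=
      hint_ψt.const_mul _
    have hintC : Integrable (fun t => h 0 * hatDensity k t) volume :=
      hint_ψ.const_mul _
    rw [hsplit, integral_sub hintA hintB, integral_sub hint_g hintC,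
      integral_const_mul, integral_const_mul, hat_integral k hk1, hat_mul_id k]
    ring
  -- pointwise bound
  have hbound : ∀ t, |hatDensity k t * (g t - h 0 - h1 0 * t)| ≤ hatDensity k t * (M * c * c) := by
    intro t
    by_cases hψ : hatDensity k t = 0
    · rw [hψ]; simp
    · have ht := hat_lt hk1 hψ
      have htS : t ∈ S := ⟨(abs_lt.mp ht).1.le, (abs_lt.mp ht).2.le⟩
      rw [abs_mul, abs_of_nonneg (hat_nonneg k t)]
      apply mul_le_mul_of_nonneg_left _ (hat_nonneg k t)
      rw [hge t htS]
      exact step2 t htS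
  rw [key]
  calc |∫ t, hatDensity k t * (g t - h 0 - h1 0 * t)|
      ≤ ∫ t, |hatDensity k t * (g t - h 0 - h1 0 * t)| := by
        have := norm_integral_le_integral_norm (fun t => hatDensity k t * (g t - h 0 - h1 0 * t)) (μ := volume)
        simpa only [Real.norm_eq_abs] using this
  _ ≤ ∫ t, hatDensity k t * (M * c * c) :=
        integral_mono hint_F.abs (hint_ψ.mul_const _) hbound
  _ = 1 * (M * c * c) := by rw [integral_mul_const, hat_integral k hk1]
  _ ≤ 36 * ((k:ℝ)^2)⁻¹ * (((m:ℝ)^2)⁻¹ + ((m:ℝ)*R)⁻¹) := by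
        rw [hM, hcdef]
        rw [one_mul]
        have : (9:ℝ) * (((m:ℝ))^2)⁻¹ + 9 * ((m:ℝ)*R)⁻¹ = 9 * ((((m:ℝ))^2)⁻¹ + ((m:ℝ)*R)⁻¹) := by ring
        field_simp
        ring_nf
        nlinarith [sq_nonneg ((k:ℝ))]
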